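/- Let θ = arccos(2 − √5). Then 2θ is not an integer multiple of 2π/k for any integer k with 1 ≤ k ≤ 30. -/

import Mathlib

/-- Pair of consecutive (a,b) coefficients: `cos (n * 2θ) = a n + b n * √5`. -/
def abSeq : ℕ → (ℤ × ℤ) × (ℤ × ℤ) := fun n =>
  Nat.rec ((1, 0), (17, -8))
    (fun _ p => (p.2, (34 * p.2.1 - 80 * p.2.2 - p.1.1,
                       -16 * p.2.1 + 34 * p.2.2 - p.1.2))) n

lemma abSeq_zero : abSeq 0 = ((1, 0), (17, -8)) := rfl

lemma abSeq_succ (n : ℕ) :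
    abSeq (n + 1) = ((abSeq n).2,
      (34 * (abSeq n).2.1 - 80 * (abSeq n).2.2 - (abSeq n).1.1,
       -16 * (abSeq n).2.1 + 34 * (abSeq n).2.2 - (abSeq n).1.2)) := rfl

lemma sqrt5_mem : (-1 : ℝ) ≤ 2 - Real.sqrt 5 ∧ 2 - Real.sqrt 5 ≤ 1 := by
  have h5 : Real.sqrt 5 * Real.sqrt 5 = 5 := Real.mul_self_sqrt (by norm_num)
  have h0 : 0 ≤ Real.sqrt 5 := Real.sqrt_nonneg 5
  constructor <;> nlinarith

lemma cos_two_theta :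
    Real.cos (2 * Real.arccos (2 - Real.sqrt 5)) = 17 - 8 * Real.sqrt 5 := by
  have h5 : Real.sqrt 5 * Real.sqrt 5 = 5 := Real.mul_self_sqrt (by norm_num)
  have hc : Real.cos (Real.arccos (2 - Real.sqrt 5)) = 2 - Real.sqrt 5 :=
    Real.cos_arccos sqrt5_mem.1 sqrt5_mem.2
  rw [Real.cos_two_mul, hc]
  nlinarith

lemma cos_mul_formula (n : ℕ) :
    Real.cos ((n : ℝ) * (2 * Real.arccos (2 - Real.sqrt 5)))
      = ((abSeq n).1.1 : ℝ) + ((abSeq n).1.2 : ℝ) * Real.sqrt 5 ∧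
    Real.cos (((n : ℝ) + 1) * (2 * Real.arccos (2 - Real.sqrt 5)))
      = ((abSeq n).2.1 : ℝ) + ((abSeq n).2.2 : ℝ) * Real.sqrt 5 := by
  set φ := 2 * Real.arccos (2 - Real.sqrt 5) with hφ
  have h5 : Real.sqrt 5 * Real.sqrt 5 = 5 := Real.mul_self_sqrt (by norm_num)
  induction n with
  | zero =>
      constructor
      · simp [abSeq_zero]
      · simpa [abSeq_zero, hφ, sub_eq_add_neg] using cos_two_theta
  | succ n ih =>
      obtain ⟨ih0, ih1⟩ := ih
      have key : Real.cos (((n : ℝ) + 1 + 1) * φ)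
          = 2 * Real.cos φ * Real.cos (((n : ℝ) + 1) * φ) - Real.cos ((n : ℝ) * φ) := by
        have e1 : ((n : ℝ) + 1 + 1) * φ = ((n : ℝ) + 1) * φ + φ := by ring
        have e2 : (n : ℝ) * φ = ((n : ℝ) + 1) * φ - φ := by ring
        rw [e1, Real.cos_add, e2, Real.cos_sub]
        ring
      constructor
      · push_cast
        rw [abSeq_succ]
        exact ih1
      · push_cast
        rw [abSeq_succ]
        dsimp only
        rw [key, cos_two_theta, ih0, ih1]
        push_cast
        linear_combination (-16 * ((abSeq n).2.2 : ℝ)) * h5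

/-- With `θ = arccos(2 - √5)`, the angle `2θ` is not an integer multiple of
`2π/k` for any integer `1 ≤ k ≤ 30`. -/
theorem two_theta_not_rational_multiple :
    ∀ k : ℕ, 1 ≤ k → k ≤ 30 → ∀ m : ℤ,
      2 * Real.arccos (2 - Real.sqrt 5) ≠ (m : ℝ) * (2 * Real.pi / (k : ℝ)) := by
  intro k hk1 hk30 m h
  have hk0 : (k : ℝ) ≠ 0 := by positivity
  have hkmul : (k : ℝ) * (2 * Real.arccos (2 - Real.sqrt 5)) = (m : ℝ) * (2 * Real.pi) := by
    field_simp at h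
    linarith [h]
  have hc1 : Real.cos ((k : ℝ) * (2 * Real.arccos (2 - Real.sqrt 5))) = 1 := by
    rw [hkmul]
    exact Real.cos_int_mul_two_pi m
  have hform := (cos_mul_formula k).1
  rw [hform] at hc1
  have hB : (abSeq k).1.2 ≠ 0 := by
    interval_cases k <;> decide
  have hirr : Irrational (Real.sqrt 5) :=
    (Nat.prime_five).irrational_sqrt
  apply hirr
  refine ⟨(1 - (abSeq k).1.1) / ((abSeq k).1.2), ?_⟩
  have hB' : ((abSeq k).1.2 : ℝ) ≠ 0 := Int.cast_ne_zero.mpr hB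
  push_cast
  field_simp
  linarith [hc1]
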